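/- Let N be a locally finite point process on ℝ̄₀ with P(N(ℝ̄₀) = 0) = 0 and E[N(ℝ̄₀∖(−a,a))] < ∞ for some a > 0, and suppose the scaled Laplace functional of N is scale-uniquely supported on [g]_sc for some g : (0,∞) → (0,∞). If (c_n)_{n≥1} is a sequence of positive real numbers such that g(c_n·y) converges to h(y) for every y > 0, then either (i) c_n → 0 or c_n → ∞ and h is a constant function with value in {0,1}, or (ii) c_n → c for some c ∈ (0,∞) and h(y) = g(c·y) for all y > 0. -/

import Mathlib

open MeasureTheory Filter Set
open scoped ENNReal Topology

/-- `expNeg z = exp(-z)` for `z ∈ [0,∞]`, with `expNeg ∞ = 0`. -/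
noncomputable def expNeg (z : ℝ≥0∞) : ℝ := if z = ∞ then 0 else Real.exp (-z.toReal)

/-- `f ∈ C_c^+(ℝ̄₀)`: a nonnegative function, continuous on `ℝ̄₀ = [-∞,∞] \ {0}`
(i.e. continuous on `ℝ` with finite limits at `±∞`), vanishing in a neighbourhood of `0`
(compact support in `ℝ̄₀` not containing `0`). -/
def IsCcPos (f : ℝ → ℝ) : Prop :=
  Continuous f ∧ (∀ x, 0 ≤ f x) ∧ (∃ ε > 0, ∀ x : ℝ, |x| < ε → f x = 0) ∧
  (∃ L : ℝ, Tendsto f atTop (𝓝 L)) ∧ (∃ L : ℝ, Tendsto f atBot (𝓝 L))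

/-- A locally finite point process on `ℝ̄₀`: a measurable family of purely atomic
`ℕ ∪ {∞}`-valued measures on `ℝ \ {0}`, a.s. finite on sets bounded away from `0`. -/
def IsPointProcess {Ω : Type*} [MeasurableSpace Ω] (μ : Measure Ω) (N : Ω → Measure ℝ) : Prop :=
  Measurable N ∧
  (∀ᵐ ω ∂μ, (N ω) {0} = 0) ∧
  (∀ᵐ ω ∂μ, ∀ b : ℝ, 0 < b → (N ω) {x : ℝ | b ≤ |x|} < ∞) ∧
  (∀ᵐ ω ∂μ, ∀ B : Set ℝ, MeasurableSet B → (N ω) B ∈ Set.range ((↑) : ℕ → ℝ≥0∞) ∪ {∞})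

/-- The scaled Laplace functional `Ψ_N(f‖y) = E[exp(-∫ f(x/y) N(dx))]`. -/
noncomputable def SLF {Ω : Type*} [MeasurableSpace Ω] (μ : Measure Ω) (N : Ω → Measure ℝ)
    (f : ℝ → ℝ) (y : ℝ) : ℝ :=
  ∫ ω, expNeg (∫⁻ x, ENNReal.ofReal (f (x / y)) ∂(N ω)) ∂μ

/-- The scaled Laplace functional of `N` is scale-uniquely supported on `[g]_sc`:
for every `f ∈ C_c^+(ℝ̄₀)` there is `c_f > 0` with `Ψ_N(f‖y) = g(c_f · y)` for all `y > 0`. -/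
def ScaleUniqSupp {Ω : Type*} [MeasurableSpace Ω] (μ : Measure Ω) (N : Ω → Measure ℝ)
    (g : ℝ → ℝ) : Prop :=
  ∀ f : ℝ → ℝ, IsCcPos f → ∃ c > 0, ∀ y > 0, SLF μ N f y = g (c * y)

lemma expNeg_zero : expNeg 0 = 1 := by simp [expNeg]

lemma expNeg_top : expNeg ∞ = 0 := by simp [expNeg]

lemma expNeg_nonneg (z : ℝ≥0∞) : 0 ≤ expNeg z := by
  unfold expNeg; split
  · exact le_refl _
  · exact (Real.exp_pos _).le

lemma expNeg_le_one (z : ℝ≥0∞) : expNeg z ≤ 1 := by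
  unfold expNeg; split
  · norm_num
  · calc Real.exp (-z.toReal) ≤ Real.exp 0 :=
        Real.exp_le_exp.mpr (neg_nonpos.mpr ENNReal.toReal_nonneg)
    _ = 1 := Real.exp_zero

lemma measurable_expNeg : Measurable expNeg := by
  unfold expNeg
  exact Measurable.ite (measurableSet_eq) measurable_const
    (Real.continuous_exp.measurable.comp ENNReal.measurable_toReal.neg)

lemma continuous_expNeg : Continuous expNeg := by
  rw [continuous_iff_continuousAt]
  intro a
  rcases eq_or_ne a ∞ with rfl | ha
  · rw [ContinuousAt, expNeg_top, Metric.tendsto_nhds]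
    intro ε hε
    set K : ℝ := max (-Real.log ε + 1) 0 with hK
    have hKnn : 0 ≤ K := le_max_right _ _
    have hexpK : Real.exp (-K) < ε := by
      have h1 : -Real.log ε + 1 ≤ K := le_max_left _ _
      have : Real.exp (-K) ≤ Real.exp (Real.log ε - 1) := by
        apply Real.exp_le_exp.mpr; linarith
      calc Real.exp (-K) ≤ Real.exp (Real.log ε - 1) := this
        _ = ε * Real.exp (-1) := by
            rw [sub_eq_add_neg, Real.exp_add, Real.exp_log hε]
        _ < ε * 1 := by
            apply mul_lt_mul_of_pos_left _ hε
            rw [Real.exp_lt_one_iff]; norm_num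
        _ = ε := mul_one _
    have hmem : (∞ : ℝ≥0∞) ∈ Set.Ioi (ENNReal.ofReal K) :=
      ENNReal.ofReal_lt_top
    filter_upwards [isOpen_Ioi.mem_nhds hmem] with z hz
    rcases eq_or_ne z ∞ with rfl | hz'
    · simpa [expNeg_top] using hε
    · have hKz : K ≤ z.toReal := by
        by_contra hcon
        push_neg at hcon
        have : z ≤ ENNReal.ofReal K := by
          rw [← ENNReal.ofReal_toReal hz']
          exact ENNReal.ofReal_le_ofReal hcon.le
        exact absurd hz (not_lt.mpr this)
      have : expNeg z ≤ Real.exp (-K) := by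
        rw [expNeg, if_neg hz']
        exact Real.exp_le_exp.mpr (by linarith)
      rw [Real.dist_eq, sub_zero, abs_of_nonneg (expNeg_nonneg z)]
      exact lt_of_le_of_lt this hexpK
  · have h1 : Tendsto (fun z : ℝ≥0∞ => Real.exp (-z.toReal)) (𝓝 a)
        (𝓝 (Real.exp (-a.toReal))) :=
      (Real.continuous_exp.tendsto _).comp
        ((continuous_neg.tendsto _).comp (ENNReal.tendsto_toReal ha))
    have h2 : ∀ᶠ z in 𝓝 a, Real.exp (-z.toReal) = expNeg z := by
      have : {z : ℝ≥0∞ | z ≠ ∞} ∈ 𝓝 a :=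
        (isClosed_singleton (x := (∞:ℝ≥0∞))).isOpen_compl.mem_nhds ha
      filter_upwards [this] with z hz
      rw [expNeg, if_neg hz]
    rw [ContinuousAt, expNeg, if_neg ha]
    exact h1.congr' h2
noncomputable def rampF (M : ℕ) (x : ℝ) : ℝ := ((M : ℝ) + 1) * min 1 (max (|x| - 1) 0)

lemma rampF_cont (M : ℕ) : Continuous (rampF M) :=
  continuous_const.mul (continuous_const.min ((continuous_abs.sub continuous_const).max
    continuous_const))

lemma rampF_nonneg (M : ℕ) (x : ℝ) : 0 ≤ rampF M x := by
  apply mul_nonneg (by positivity)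
  exact le_min zero_le_one (le_max_right _ _)

lemma rampF_le (M : ℕ) (x : ℝ) : rampF M x ≤ (M : ℝ) + 1 := by
  have : min 1 (max (|x| - 1) 0) ≤ 1 := min_le_left _ _
  calc rampF M x ≤ ((M:ℝ)+1) * 1 := by
        apply mul_le_mul_of_nonneg_left this (by positivity)
    _ = (M:ℝ)+1 := mul_one _

lemma rampF_eq_zero (M : ℕ) {x : ℝ} (h : |x| ≤ 1) : rampF M x = 0 := by
  unfold rampF
  rw [max_eq_right (by linarith), min_eq_right zero_le_one, mul_zero]

lemma rampF_eq_zero_of_div {M : ℕ} {x y : ℝ} (hy : 0 < y) (h : |x| < y) :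
    rampF M (x / y) = 0 := by
  apply rampF_eq_zero
  rw [abs_div, abs_of_pos hy, div_le_one hy]
  exact h.le

lemma rampF_eq_const (M : ℕ) {x : ℝ} (h : 2 ≤ |x|) : rampF M x = (M : ℝ) + 1 := by
  unfold rampF
  rw [max_eq_left (by linarith), min_eq_left (by linarith), mul_one]

lemma isCcPos_rampF (M : ℕ) : IsCcPos (rampF M) := by
  refine ⟨rampF_cont M, rampF_nonneg M, ⟨1, one_pos, fun x hx => rampF_eq_zero M hx.le⟩,
    ⟨(M : ℝ) + 1, ?_⟩, ⟨(M : ℝ) + 1, ?_⟩⟩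
  · apply tendsto_const_nhds.congr'
    filter_upwards [eventually_ge_atTop (2:ℝ)] with x hx
    rw [rampF_eq_const M (by rw [abs_of_nonneg (by linarith)]; exact hx)]
  · apply tendsto_const_nhds.congr'
    filter_upwards [eventually_le_atBot (-2:ℝ)] with x hx
    rw [rampF_eq_const M (by rw [abs_of_nonpos (by linarith)]; linarith)]

section Core

variable {Ω : Type*} [MeasurableSpace Ω] (μ : Measure Ω) [IsProbabilityMeasure μ]
  (N : Ω → Measure ℝ)

lemma rampF_ofReal_le_indicator (M : ℕ) {y : ℝ} (hy : 0 < y) (x : ℝ) :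
    ENNReal.ofReal (rampF M (x / y)) ≤
      ({x : ℝ | y ≤ |x|}).indicator (fun _ => ENNReal.ofReal ((M:ℝ)+1)) x := by
  by_cases hx : y ≤ |x|
  · rw [Set.indicator_of_mem (show x ∈ {x : ℝ | y ≤ |x|} from hx)]
    exact ENNReal.ofReal_le_ofReal (rampF_le M _)
  · push_neg at hx
    rw [Set.indicator_of_notMem (show x ∉ {x : ℝ | y ≤ |x|} by simpa using hx.not_ge), rampF_eq_zero_of_div hy hx]
    simp

lemma measurableSet_absIci (y : ℝ) : MeasurableSet {x : ℝ | y ≤ |x|} :=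
  measurableSet_le measurable_const measurable_abs

lemma lintegral_indicator_absIci (M : ℕ) (y : ℝ) (ν : Measure ℝ) :
    ∫⁻ x, ({x : ℝ | y ≤ |x|}).indicator (fun _ => ENNReal.ofReal ((M:ℝ)+1)) x ∂ν
      = ENNReal.ofReal ((M:ℝ)+1) * ν {x : ℝ | y ≤ |x|} := by
  rw [lintegral_indicator (measurableSet_absIci y), setLIntegral_const]

lemma measurable_innerInt (hNm : Measurable N) (M : ℕ) (y : ℝ) :
    Measurable fun ω => ∫⁻ x, ENNReal.ofReal (rampF M (x / y)) ∂(N ω) := by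
  have hf : Measurable fun x : ℝ => ENNReal.ofReal (rampF M (x / y)) :=
    ENNReal.measurable_ofReal.comp ((rampF_cont M).measurable.comp
      (measurable_id.div_const y))
  exact (Measure.measurable_lintegral hf).comp hNm

lemma outerDCT {F : ℕ → Ω → ℝ≥0∞} {G : Ω → ℝ≥0∞} (hF : ∀ n, Measurable (F n))
    (hconv : ∀ᵐ ω ∂μ, Tendsto (fun n => F n ω) atTop (𝓝 (G ω))) :
    Tendsto (fun n => ∫ ω, expNeg (F n ω) ∂μ) atTop (𝓝 (∫ ω, expNeg (G ω) ∂μ)) := by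
  apply tendsto_integral_of_dominated_convergence (fun _ => (1:ℝ))
  · exact fun n => (measurable_expNeg.comp (hF n)).aestronglyMeasurable
  · exact integrable_const 1
  · intro n
    filter_upwards with ω
    rw [Real.norm_eq_abs, abs_of_nonneg (expNeg_nonneg _)]
    exact expNeg_le_one _
  · filter_upwards [hconv] with ω hω
    exact (continuous_expNeg.tendsto _).comp hω

end Core

section Core2

variable {Ω : Type*} [MeasurableSpace Ω] (μ : Measure Ω) [IsProbabilityMeasure μ]
  (N : Ω → Measure ℝ)

lemma innerA (hfin : ∀ᵐ ω ∂μ, ∀ b : ℝ, 0 < b → N ω {x : ℝ | b ≤ |x|} < ∞)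
    (M : ℕ) {t : ℝ} (ht : 0 < t) (y : ℕ → ℝ) (hy : ∀ n, 0 < y n)
    (hyt : Tendsto y atTop (𝓝 t)) :
    ∀ᵐ ω ∂μ, Tendsto (fun n => ∫⁻ x, ENNReal.ofReal (rampF M (x / y n)) ∂(N ω)) atTop
      (𝓝 (∫⁻ x, ENNReal.ofReal (rampF M (x / t)) ∂(N ω))) := by
  filter_upwards [hfin] with ω hω
  apply tendsto_lintegral_filter_of_dominated_convergence
    ({x : ℝ | t/2 ≤ |x|}.indicator (fun _ => ENNReal.ofReal ((M:ℝ)+1)))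
  · apply Eventually.of_forall
    intro n
    exact ENNReal.measurable_ofReal.comp ((rampF_cont M).measurable.comp
      (measurable_id.div_const _))
  · have hev : ∀ᶠ n in atTop, t/2 < y n := hyt.eventually (eventually_gt_nhds (by linarith))
    filter_upwards [hev] with n hn
    apply Eventually.of_forall
    intro x
    by_cases hx : t/2 ≤ |x|
    · rw [Set.indicator_of_mem (show x ∈ {x : ℝ | t/2 ≤ |x|} from hx)]
      exact ENNReal.ofReal_le_ofReal (rampF_le M _)
    · push_neg at hx
      rw [Set.indicator_of_notMem (show x ∉ {x : ℝ | t/2 ≤ |x|} by simpa using hx.not_ge),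
        rampF_eq_zero_of_div (hy n) (by linarith)]
      simp
  · rw [lintegral_indicator_absIci]
    exact ENNReal.mul_ne_top ENNReal.ofReal_ne_top (hω (t/2) (by linarith)).ne
  · apply Eventually.of_forall
    intro x
    have hx : Tendsto (fun n => x / y n) atTop (𝓝 (x / t)) :=
      tendsto_const_nhds.div hyt ht.ne'
    exact (ENNReal.continuous_ofReal.tendsto _).comp (((rampF_cont M).tendsto _).comp hx)

lemma innerB (hfin : ∀ᵐ ω ∂μ, ∀ b : ℝ, 0 < b → N ω {x : ℝ | b ≤ |x|} < ∞)
    (M : ℕ) (y : ℕ → ℝ) (hy : ∀ n, 0 < y n) (hyt : Tendsto y atTop atTop) :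
    ∀ᵐ ω ∂μ, Tendsto (fun n => ∫⁻ x, ENNReal.ofReal (rampF M (x / y n)) ∂(N ω)) atTop
      (𝓝 0) := by
  filter_upwards [hfin] with ω hω
  have key : Tendsto (fun k : ℕ => N ω {x : ℝ | ((k:ℝ)+1) ≤ |x|}) atTop (𝓝 0) := by
    have hempty : (⋂ k : ℕ, {x : ℝ | ((k:ℝ)+1) ≤ |x|}) = ∅ := by
      ext x
      simp only [mem_iInter, mem_setOf_eq, mem_empty_iff_false, iff_false, not_forall, not_le]
      obtain ⟨k, hk⟩ := exists_nat_gt |x|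
      exact ⟨k, by linarith⟩
    have h0 := tendsto_measure_iInter_atTop (μ := N ω)
      (s := fun k : ℕ => {x : ℝ | ((k:ℝ)+1) ≤ |x|})
      (fun k => (measurableSet_absIci _).nullMeasurableSet)
      (fun k l hkl x hx => by
        simp only [mem_setOf_eq] at *
        have : (k:ℝ) ≤ (l:ℝ) := Nat.cast_le.mpr hkl
        linarith)
      ⟨0, by simpa using (hω 1 one_pos).ne⟩
    rw [hempty, measure_empty] at h0
    exact h0
  have hμ0 : Tendsto (fun n => N ω {x : ℝ | y n ≤ |x|}) atTop (𝓝 0) := by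
    rw [ENNReal.tendsto_atTop_zero]
    intro ε hε
    obtain ⟨k0, hk0⟩ := ENNReal.tendsto_atTop_zero.mp key ε hε
    obtain ⟨n0, hn0⟩ := eventually_atTop.mp (hyt.eventually_ge_atTop ((k0:ℝ)+1))
    refine ⟨n0, fun n hn => le_trans (measure_mono fun x hx => ?_) (hk0 k0 le_rfl)⟩
    simp only [mem_setOf_eq] at *
    linarith [hn0 n hn]
  have upper : Tendsto (fun n => ENNReal.ofReal ((M:ℝ)+1) * N ω {x : ℝ | y n ≤ |x|}) atTop
      (𝓝 0) := by
    have := ENNReal.Tendsto.const_mul (a := ENNReal.ofReal ((M:ℝ)+1)) hμ0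
      (Or.inr ENNReal.ofReal_ne_top)
    simpa using this
  apply tendsto_of_tendsto_of_tendsto_of_le_of_le tendsto_const_nhds upper
  · exact fun n => zero_le
  · intro n
    calc ∫⁻ x, ENNReal.ofReal (rampF M (x / y n)) ∂(N ω)
        ≤ ∫⁻ x, ({x : ℝ | y n ≤ |x|}).indicator (fun _ => ENNReal.ofReal ((M:ℝ)+1)) x ∂(N ω) :=
          lintegral_mono (rampF_ofReal_le_indicator M (hy n))
      _ = ENNReal.ofReal ((M:ℝ)+1) * N ω {x : ℝ | y n ≤ |x|} := lintegral_indicator_absIci M _ _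

lemma innerC (hatom : ∀ᵐ ω ∂μ, N ω {0} = 0)
    (M : ℕ) (y : ℕ → ℝ) (hy : ∀ n, 0 < y n) (hy0 : Tendsto y atTop (𝓝 0)) :
    ∀ᵐ ω ∂μ, Tendsto (fun n => ∫⁻ x, ENNReal.ofReal (rampF M (x / y n)) ∂(N ω)) atTop
      (𝓝 (ENNReal.ofReal ((M:ℝ)+1) * N ω Set.univ)) := by
  filter_upwards [hatom] with ω hω
  set A := ENNReal.ofReal ((M:ℝ)+1) * N ω Set.univ with hA
  have hmeasn : ∀ n, Measurable fun x : ℝ => ENNReal.ofReal (rampF M (x / y n)) := fun n =>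
    ENNReal.measurable_ofReal.comp ((rampF_cont M).measurable.comp (measurable_id.div_const _))
  have hub : ∀ n, ∫⁻ x, ENNReal.ofReal (rampF M (x / y n)) ∂(N ω) ≤ A := by
    intro n
    calc ∫⁻ x, ENNReal.ofReal (rampF M (x / y n)) ∂(N ω)
        ≤ ∫⁻ _x, ENNReal.ofReal ((M:ℝ)+1) ∂(N ω) :=
          lintegral_mono fun x => ENNReal.ofReal_le_ofReal (rampF_le M _)
      _ = A := lintegral_const _
  have hL : ∀ x : ℝ, x ≠ 0 →
      liminf (fun n => ENNReal.ofReal (rampF M (x / y n))) atTop = ENNReal.ofReal ((M:ℝ)+1) := by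
    intro x hx
    have hxpos : 0 < |x| := abs_pos.mpr hx
    have hev : ∀ᶠ n in atTop,
        ENNReal.ofReal (rampF M (x / y n)) = ENNReal.ofReal ((M:ℝ)+1) := by
      have h2 : ∀ᶠ n in atTop, y n < |x|/2 := hy0.eventually (eventually_lt_nhds (by linarith))
      filter_upwards [h2] with n hn
      congr 1
      apply rampF_eq_const
      rw [abs_div, abs_of_pos (hy n), le_div_iff₀ (hy n)]
      linarith
    exact (tendsto_const_nhds.congr' (hev.mono fun n h => h.symm)).liminf_eq
  have hAle : A ≤ liminf (fun n => ∫⁻ x, ENNReal.ofReal (rampF M (x / y n)) ∂(N ω)) atTop := by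
    have hfatou := lintegral_liminf_le (μ := N ω) (u := atTop) hmeasn
    have heq : ∫⁻ x, liminf (fun n => ENNReal.ofReal (rampF M (x / y n))) atTop ∂(N ω) = A := by
      rw [show A = ∫⁻ _x, ENNReal.ofReal ((M:ℝ)+1) ∂(N ω) from (lintegral_const _).symm]
      apply lintegral_congr_ae
      have hae : ∀ᵐ x ∂(N ω), x ≠ 0 := by
        rw [ae_iff]
        simpa using hω
      filter_upwards [hae] with x hx
      exact hL x hx
    rw [← heq]
    exact hfatou
  have hsle : limsup (fun n => ∫⁻ x, ENNReal.ofReal (rampF M (x / y n)) ∂(N ω)) atTop ≤ A :=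
    limsup_le_of_le (by isBoundedDefault) (Eventually.of_forall hub)
  have hll : liminf (fun n => ∫⁻ x, ENNReal.ofReal (rampF M (x / y n)) ∂(N ω)) atTop ≤
      limsup (fun n => ∫⁻ x, ENNReal.ofReal (rampF M (x / y n)) ∂(N ω)) atTop :=
    liminf_le_limsup (by isBoundedDefault) (by isBoundedDefault)
  exact tendsto_of_liminf_eq_limsup
    (le_antisymm (hll.trans hsle) hAle)
    (le_antisymm hsle (hAle.trans hll))

end Core2

section Core3

variable {Ω : Type*} [MeasurableSpace Ω] (μ : Measure Ω) [IsProbabilityMeasure μ]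
  (N : Ω → Measure ℝ)

lemma slfA (hNm : Measurable N)
    (hfin : ∀ᵐ ω ∂μ, ∀ b : ℝ, 0 < b → N ω {x : ℝ | b ≤ |x|} < ∞)
    (M : ℕ) {t : ℝ} (ht : 0 < t) (y : ℕ → ℝ) (hy : ∀ n, 0 < y n)
    (hyt : Tendsto y atTop (𝓝 t)) :
    Tendsto (fun n => SLF μ N (rampF M) (y n)) atTop (𝓝 (SLF μ N (rampF M) t)) :=
  outerDCT μ (fun n => measurable_innerInt N hNm M (y n)) (innerA μ N hfin M ht y hy hyt)

lemma slfB (hNm : Measurable N)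
    (hfin : ∀ᵐ ω ∂μ, ∀ b : ℝ, 0 < b → N ω {x : ℝ | b ≤ |x|} < ∞)
    (M : ℕ) (y : ℕ → ℝ) (hy : ∀ n, 0 < y n) (hyt : Tendsto y atTop atTop) :
    Tendsto (fun n => SLF μ N (rampF M) (y n)) atTop (𝓝 1) := by
  have := outerDCT μ (G := fun _ => 0) (fun n => measurable_innerInt N hNm M (y n))
    (innerB μ N hfin M y hy hyt)
  simpa [expNeg_zero, SLF] using this

lemma slfC (hNm : Measurable N) (hatom : ∀ᵐ ω ∂μ, N ω {0} = 0)
    (M : ℕ) (y : ℕ → ℝ) (hy : ∀ n, 0 < y n) (hy0 : Tendsto y atTop (𝓝 0)) :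
    Tendsto (fun n => SLF μ N (rampF M) (y n)) atTop
      (𝓝 (∫ ω, expNeg (ENNReal.ofReal ((M:ℝ)+1) * N ω Set.univ) ∂μ)) :=
  outerDCT μ (fun n => measurable_innerInt N hNm M (y n)) (innerC μ N hatom M y hy hy0)

lemma betaZero (hNm : Measurable N) (hzero : μ {ω | N ω Set.univ = 0} = 0) :
    Tendsto (fun M : ℕ => ∫ ω, expNeg (ENNReal.ofReal ((M:ℝ)+1) * N ω Set.univ) ∂μ) atTop
      (𝓝 0) := by
  have hae : ∀ᵐ ω ∂μ, N ω Set.univ ≠ 0 := by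
    rw [ae_iff]
    simpa using hzero
  have hconv : ∀ᵐ ω ∂μ, Tendsto (fun M : ℕ => ENNReal.ofReal ((M:ℝ)+1) * N ω Set.univ) atTop
      (𝓝 ∞) := by
    filter_upwards [hae] with ω hω
    have h1 : Tendsto (fun M : ℕ => ENNReal.ofReal ((M:ℝ)+1)) atTop (𝓝 ∞) :=
      ENNReal.tendsto_ofReal_atTop.comp
        (tendsto_atTop_add_const_right _ 1 tendsto_natCast_atTop_atTop)
    have h2 := ENNReal.Tendsto.mul_const h1 (b := N ω Set.univ) (Or.inl (by simp))
    rwa [ENNReal.top_mul hω] at h2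
  have := outerDCT μ (G := fun _ => ∞)
    (fun M => measurable_const.mul ((Measure.measurable_coe MeasurableSet.univ).comp hNm))
    hconv
  simpa [expNeg_top] using this

end Core3

lemma TRI (d : ℕ → ℝ) (hd : ∀ n, 0 < d n) :
    (∃ φ : ℕ → ℕ, StrictMono φ ∧ Tendsto (fun k => d (φ k)) atTop (𝓝 0)) ∨
    (∃ φ : ℕ → ℕ, StrictMono φ ∧ Tendsto (fun k => d (φ k)) atTop atTop) ∨
    (∃ c' : ℝ, 0 < c' ∧ ∃ φ : ℕ → ℕ, StrictMono φ ∧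
      Tendsto (fun k => d (φ k)) atTop (𝓝 c')) := by
  obtain ⟨L, -, φ, hφ, hLim⟩ := isCompact_univ.tendsto_subseq
    (x := fun n => ENNReal.ofReal (d n)) (fun n => Set.mem_univ _)
  have hval : ∀ k, (ENNReal.ofReal (d (φ k))).toReal = d (φ k) := fun k =>
    ENNReal.toReal_ofReal (hd (φ k)).le
  rcases eq_or_ne L ∞ with rfl | hLtop
  · right; left
    refine ⟨φ, hφ, ?_⟩
    rw [tendsto_atTop]
    intro K
    have hmem : (∞ : ℝ≥0∞) ∈ Set.Ioi (ENNReal.ofReal (max K 0)) := ENNReal.ofReal_lt_top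
    filter_upwards [hLim (isOpen_Ioi.mem_nhds hmem)] with k hk
    simp only [Set.mem_preimage, Set.mem_Ioi] at hk
    by_contra hcon
    push_neg at hcon
    have : ENNReal.ofReal (d (φ k)) ≤ ENNReal.ofReal (max K 0) :=
      ENNReal.ofReal_le_ofReal (le_trans hcon.le (le_max_left _ _))
    exact absurd hk (not_lt.mpr this)
  · have htend : Tendsto (fun k => d (φ k)) atTop (𝓝 L.toReal) := by
      have := (ENNReal.tendsto_toReal hLtop).comp hLim
      exact this.congr fun k => hval k
    rcases eq_or_ne L 0 with rfl | hL0
    · left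
      exact ⟨φ, hφ, by simpa using htend⟩
    · right; right
      exact ⟨L.toReal, ENNReal.toReal_pos hL0 hLtop, φ, hφ, htend⟩


/-- under the standing assumptions, if `(c_n)` are positive reals with
`g(c_n·y) → h(y)` for every `y > 0`, then either `c_n → 0` or `c_n → ∞` and `h` is constant
on `(0,∞)` with value in `{0,1}`, or `c_n → c ∈ (0,∞)` and `h(y) = g(c·y)` for all `y > 0`. -/
theorem stmt8 {Ω : Type*} [MeasurableSpace Ω] (μ : Measure Ω) [IsProbabilityMeasure μ]
    (N : Ω → Measure ℝ) (hN : IsPointProcess μ N)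
    (hzero : μ {ω | N ω Set.univ = 0} = 0)
    (hfin : ∃ a > 0, ∫⁻ ω, (N ω) {x : ℝ | a ≤ |x|} ∂μ < ∞)
    (g : ℝ → ℝ) (hg : ∀ x > 0, 0 < g x)
    (hsupp : ScaleUniqSupp μ N g)
    (c : ℕ → ℝ) (hc : ∀ n, 0 < c n)
    (h : ℝ → ℝ)
    (hlim : ∀ y > (0:ℝ), Tendsto (fun n => g (c n * y)) atTop (𝓝 (h y))) :
    ((Tendsto c atTop (𝓝 0) ∨ Tendsto c atTop atTop) ∧
        ∃ v ∈ ({0, 1} : Set ℝ), ∀ y > (0:ℝ), h y = v) ∨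
      (∃ c₀ > (0:ℝ), Tendsto c atTop (𝓝 c₀) ∧ ∀ y > (0:ℝ), h y = g (c₀ * y)) := by
  obtain ⟨hNm, hatom, hfin', -⟩ := hN
  -- representation of g via SLF of the ramp functions
  have hrep : ∀ M : ℕ, ∃ cc : ℝ, 0 < cc ∧ ∀ t : ℝ, 0 < t → g t = SLF μ N (rampF M) (t / cc) := by
    intro M
    obtain ⟨cc, hccpos, hcc⟩ := hsupp (rampF M) (isCcPos_rampF M)
    refine ⟨cc, hccpos, fun t ht => ?_⟩
    have h1 := hcc (t / cc) (div_pos ht hccpos)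
    rw [mul_comm, div_mul_cancel₀ t hccpos.ne'] at h1
    exact h1.symm
  obtain ⟨c0, hc0pos, hc0⟩ := hrep 0
  -- sequential continuity of g
  have G2 : ∀ (u : ℕ → ℝ), (∀ n, 0 < u n) → ∀ t : ℝ, 0 < t → Tendsto u atTop (𝓝 t) →
      Tendsto (fun n => g (u n)) atTop (𝓝 (g t)) := by
    intro u hu t ht hut
    have h2 := slfA μ N hNm hfin' 0 (div_pos ht hc0pos) (fun n => u n / c0)
      (fun n => div_pos (hu n) hc0pos) (hut.div_const c0)
    have h3 := h2.congr fun n => (hc0 (u n) (hu n)).symm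
    rwa [← hc0 t ht] at h3
  -- limit of g at infinity
  have G3 : ∀ (u : ℕ → ℝ), (∀ n, 0 < u n) → Tendsto u atTop atTop →
      Tendsto (fun n => g (u n)) atTop (𝓝 1) := by
    intro u hu hut
    have h2 := slfB μ N hNm hfin' 0 (fun n => u n / c0)
      (fun n => div_pos (hu n) hc0pos) (Tendsto.atTop_div_const hc0pos hut)
    exact h2.congr fun n => (hc0 (u n) (hu n)).symm
  -- limit of g at zero
  set β : ℕ → ℝ := fun M => ∫ ω, expNeg (ENNReal.ofReal ((M:ℝ)+1) * N ω Set.univ) ∂μ with hβ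
  have hβconv : ∀ M : ℕ, ∀ (u : ℕ → ℝ), (∀ n, 0 < u n) → Tendsto u atTop (𝓝 0) →
      Tendsto (fun n => g (u n)) atTop (𝓝 (β M)) := by
    intro M u hu hu0
    obtain ⟨cM, hcMpos, hcM⟩ := hrep M
    have h2 := slfC μ N hNm hatom M (fun n => u n / cM) (fun n => div_pos (hu n) hcMpos)
      (by simpa using hu0.div_const cM)
    exact h2.congr fun n => (hcM (u n) (hu n)).symm
  have hβ0 : β 0 = 0 := by
    have hone : ∀ n : ℕ, (0:ℝ) < 1 / ((n:ℝ) + 1) := fun n => by positivity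
    have hβeq : ∀ M, β M = β 0 :=
      fun M => tendsto_nhds_unique
        (hβconv M _ hone tendsto_one_div_add_atTop_nhds_zero_nat)
        (hβconv 0 _ hone tendsto_one_div_add_atTop_nhds_zero_nat)
    have h2 : Tendsto β atTop (𝓝 (β 0)) := by
      rw [show β = fun _ => β 0 from funext hβeq]
      exact tendsto_const_nhds
    exact tendsto_nhds_unique h2 (betaZero μ N hNm hzero)
  have G4 : ∀ (u : ℕ → ℝ), (∀ n, 0 < u n) → Tendsto u atTop (𝓝 0) →
      Tendsto (fun n => g (u n)) atTop (𝓝 0) := by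
    intro u hu hu0
    have := hβconv 0 u hu hu0
    rwa [hβ0] at this
  -- g is not identically one
  have Gne1 : ¬ (∀ t : ℝ, 0 < t → g t = 1) := by
    intro hall
    have hone : ∀ n : ℕ, (0:ℝ) < 1 / ((n:ℝ) + 1) := fun n => by positivity
    have h1 := G4 _ hone tendsto_one_div_add_atTop_nhds_zero_nat
    have h2 : Tendsto (fun n : ℕ => g (1 / ((n:ℝ) + 1))) atTop (𝓝 1) :=
      tendsto_const_nhds.congr fun n => (hall _ (hone n)).symm
    exact one_ne_zero (tendsto_nhds_unique h2 h1)
  -- scale rigidity of g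
  have Glam : ∀ c' c'' : ℝ, 0 < c' → 0 < c'' → (∀ y : ℝ, 0 < y → g (c' * y) = g (c'' * y)) →
      c' = c'' := by
    intro c' c'' hc' hc'' hrel
    have hrel' : ∀ t : ℝ, 0 < t → g t = g (c''/c' * t) := by
      intro t ht
      have h1 := hrel (t / c') (div_pos ht hc')
      rw [mul_comm c' _, div_mul_cancel₀ t hc'.ne'] at h1
      rw [h1]
      ring_nf
    set l := c''/c' with hl
    have hlpos : 0 < l := div_pos hc'' hc'
    have hiter : ∀ t : ℝ, 0 < t → ∀ k : ℕ, g t = g (l ^ k * t) := by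
      intro t ht k
      induction k with
      | zero => simp
      | succ k ih =>
        rw [ih, hrel' (l ^ k * t) (by positivity)]
        ring_nf
    rcases lt_trichotomy l 1 with hlt | heq | hgt
    · exfalso
      have htend : Tendsto (fun k : ℕ => l ^ k * 1) atTop (𝓝 0) := by
        simpa using tendsto_pow_atTop_nhds_zero_of_lt_one hlpos.le hlt
      have h1 := G4 (fun k => l ^ k * 1) (fun k => by positivity) htend
      have h2 : Tendsto (fun k : ℕ => g (l ^ k * 1)) atTop (𝓝 (g 1)) :=
        tendsto_const_nhds.congr fun k => hiter 1 one_pos k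
      exact (hg 1 one_pos).ne' (tendsto_nhds_unique h2 h1)
    · exact ((div_eq_one_iff_eq hc'.ne').mp heq).symm
    · exfalso
      apply Gne1
      intro t ht
      have htend : Tendsto (fun k : ℕ => l ^ k * t) atTop atTop :=
        Tendsto.atTop_mul_const ht (tendsto_pow_atTop_atTop_of_one_lt hgt)
      have h1 := G3 (fun k => l ^ k * t) (fun k => by positivity) htend
      have h2 : Tendsto (fun k : ℕ => g (l ^ k * t)) atTop (𝓝 (g t)) :=
        tendsto_const_nhds.congr fun k => hiter t ht k
      exact tendsto_nhds_unique h2 h1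
  -- limits of h along subsequential limits of scaling sequences
  have hsub : ∀ (ψ : ℕ → ℕ), StrictMono ψ → ∀ y : ℝ, 0 < y →
      Tendsto (fun k => g (c (ψ k) * y)) atTop (𝓝 (h y)) :=
    fun ψ hψ y hy => (hlim y hy).comp hψ.tendsto_atTop
  have HL1 : ∀ (ψ : ℕ → ℕ), StrictMono ψ → ∀ {c'' : ℝ}, 0 < c'' →
      Tendsto (fun k => c (ψ k)) atTop (𝓝 c'') → ∀ y : ℝ, 0 < y → h y = g (c'' * y) := by
    intro ψ hψ c'' hc'' hte y hy
    have h1 := G2 (fun k => c (ψ k) * y) (fun k => mul_pos (hc _) hy) (c'' * y)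
      (mul_pos hc'' hy) (hte.mul_const y)
    exact tendsto_nhds_unique (hsub ψ hψ y hy) h1
  have HL2 : ∀ (ψ : ℕ → ℕ), StrictMono ψ →
      Tendsto (fun k => c (ψ k)) atTop (𝓝 0) → ∀ y : ℝ, 0 < y → h y = 0 := by
    intro ψ hψ hte y hy
    have h1 := G4 (fun k => c (ψ k) * y) (fun k => mul_pos (hc _) hy)
      (by simpa using hte.mul_const y)
    exact tendsto_nhds_unique (hsub ψ hψ y hy) h1
  have HL3 : ∀ (ψ : ℕ → ℕ), StrictMono ψ →
      Tendsto (fun k => c (ψ k)) atTop atTop → ∀ y : ℝ, 0 < y → h y = 1 := by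
    intro ψ hψ hte y hy
    have h1 := G3 (fun k => c (ψ k) * y) (fun k => mul_pos (hc _) hy)
      (Tendsto.atTop_mul_const hy hte)
    exact tendsto_nhds_unique (hsub ψ hψ y hy) h1
  -- main case analysis
  rcases TRI c hc with ⟨φ, hφ, hφ0⟩ | ⟨φ, hφ, hφtop⟩ | ⟨c', hc', φ, hφ, hφc⟩
  · -- subsequence tending to zero: h ≡ 0 and c → 0
    have hh0 : ∀ y : ℝ, 0 < y → h y = 0 := HL2 φ hφ hφ0
    have htend : Tendsto c atTop (𝓝 0) := by
      by_contra hcon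
      obtain ⟨s, hs, hfreq⟩ := not_tendsto_iff_exists_frequently_notMem.mp hcon
      obtain ⟨ψ, hψ, hψs⟩ := extraction_of_frequently_atTop hfreq
      rcases TRI (fun k => c (ψ k)) (fun k => hc _)
        with ⟨σ, hσ, h0'⟩ | ⟨σ, hσ, htop'⟩ | ⟨c'', hc'', σ, hσ, hc''t⟩
      · obtain ⟨k, hk⟩ := (h0'.eventually_mem hs).exists
        exact hψs (σ k) hk
      · have h1 := HL3 (ψ ∘ σ) (hψ.comp hσ) htop' 1 one_pos
        rw [hh0 1 one_pos] at h1
        exact one_ne_zero h1.symm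
      · have h1 := HL1 (ψ ∘ σ) (hψ.comp hσ) hc'' hc''t 1 one_pos
        rw [hh0 1 one_pos] at h1
        exact (hg _ (by simpa using hc'')).ne' h1.symm
    exact Or.inl ⟨Or.inl htend, 0, by simp, hh0⟩
  · -- subsequence tending to infinity: h ≡ 1 and c → ∞
    have hh1 : ∀ y : ℝ, 0 < y → h y = 1 := HL3 φ hφ hφtop
    have htend : Tendsto c atTop atTop := by
      by_contra hcon
      rw [tendsto_atTop] at hcon
      push_neg at hcon
      obtain ⟨b, hb⟩ := hcon
      obtain ⟨ψ, hψ, hψb⟩ := extraction_of_frequently_atTop hb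
      rcases TRI (fun k => c (ψ k)) (fun k => hc _)
        with ⟨σ, hσ, h0'⟩ | ⟨σ, hσ, htop'⟩ | ⟨c'', hc'', σ, hσ, hc''t⟩
      · have h1 := HL2 (ψ ∘ σ) (hψ.comp hσ) h0' 1 one_pos
        rw [hh1 1 one_pos] at h1
        exact one_ne_zero h1
      · obtain ⟨k, hk⟩ := (htop'.eventually_ge_atTop b).exists
        exact absurd hk (not_le.mpr (hψb (σ k)))
      · apply Gne1
        intro t ht
        have h1 := HL1 (ψ ∘ σ) (hψ.comp hσ) hc'' hc''t (t / c'') (div_pos ht hc'')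
        rw [mul_comm, div_mul_cancel₀ t hc''.ne'] at h1
        rw [← h1, hh1 _ (div_pos ht hc'')]
    exact Or.inl ⟨Or.inr htend, 1, by simp, hh1⟩
  · -- subsequence tending to a positive limit: h = g(c'·) and c → c'
    have hhg : ∀ y : ℝ, 0 < y → h y = g (c' * y) := HL1 φ hφ hc' hφc
    have htend : Tendsto c atTop (𝓝 c') := by
      by_contra hcon
      obtain ⟨s, hs, hfreq⟩ := not_tendsto_iff_exists_frequently_notMem.mp hcon
      obtain ⟨ψ, hψ, hψs⟩ := extraction_of_frequently_atTop hfreq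
      rcases TRI (fun k => c (ψ k)) (fun k => hc _)
        with ⟨σ, hσ, h0'⟩ | ⟨σ, hσ, htop'⟩ | ⟨c'', hc'', σ, hσ, hc''t⟩
      · have h1 := HL2 (ψ ∘ σ) (hψ.comp hσ) h0' 1 one_pos
        rw [hhg 1 one_pos] at h1
        exact (hg _ (by simpa using hc')).ne' h1
      · apply Gne1
        intro t ht
        have h1 := HL3 (ψ ∘ σ) (hψ.comp hσ) htop' (t / c') (div_pos ht hc')
        rw [hhg _ (div_pos ht hc'), mul_comm, div_mul_cancel₀ t hc'.ne'] at h1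
        exact h1
      · have h1 : ∀ y : ℝ, 0 < y → g (c' * y) = g (c'' * y) := by
          intro y hy
          rw [← hhg y hy, HL1 (ψ ∘ σ) (hψ.comp hσ) hc'' hc''t y hy]
        have : c' = c'' := Glam c' c'' hc' hc'' h1
        subst this
        obtain ⟨k, hk⟩ := (hc''t.eventually_mem hs).exists
        exact hψs (σ k) hk
    exact Or.inr ⟨c', hc', htend, hhg⟩
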